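/- Let X be a finite totally ordered set partitioned as X = ⊔_i I_i, and suppose each I_i is further partitioned as I_i = ⊔_j J_{i,j}. If τ is a permutation of X with decomposition τ = π∘σ where π is an (I_i)-shuffle and σ = (σ_i) lies in the Young subgroup of (I_i), then τ is a (J_{i,j})-shuffle if and only if each σ_i is a (J_{i,j})_j-shuffle of I_i. -/
import Mathlib


/-- `π` is a shuffle with respect to the block decomposition given by `P`. -/
def IsShuffle {X ι : Type*} [LinearOrder X] (P : X → ι) (π : Equiv.Perm X) : Prop :=
  ∀ i : ι, StrictMonoOn (⇑π) {x | P x = i}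

/-- `σ` lies in the Young subgroup of the partition given by `P`. -/
def IsYoung {X ι : Type*} (P : X → ι) (σ : Equiv.Perm X) : Prop :=
  ∀ x : X, P (σ x) = P x

/-- Let `X` be partitioned into blocks by `P : X → ι`, and let each block be further
partitioned by a refinement `Q : X → κ` (so that each `Q`-block lies inside a `P`-block,
as witnessed by `f : κ → ι`).  If `τ = π * σ` where `π` is a `P`-shuffle and `σ` is in the
Young subgroup of `P`, then `τ` is a `Q`-shuffle if and only if `σ` is (i.e. each `σ_i`
is a shuffle of `I_i` with respect to the partition `(J_{i,j})_j`). -/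
theorem shuffle_refinement {X ι κ : Type*} [Fintype X] [LinearOrder X]
    (P : X → ι) (Q : X → κ) (f : κ → ι) (hf : ∀ x, P x = f (Q x))
    (τ π σ : Equiv.Perm X) (hπ : IsShuffle P π) (hσ : IsYoung P σ)
    (hτ : τ = π * σ) :
    IsShuffle Q τ ↔ IsShuffle Q σ := by
  subst hτ
  have key : ∀ i : κ, ∀ x ∈ {x | Q x = i}, ∀ y ∈ {x | Q x = i},
      (π * σ) x < (π * σ) y ↔ σ x < σ y := by
    intro i x hx y hy
    have hmx : σ x ∈ {z | P z = f i} := by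
      simp only [Set.mem_setOf_eq] at hx ⊢
      rw [hσ, hf, hx]
    have hmy : σ y ∈ {z | P z = f i} := by
      simp only [Set.mem_setOf_eq] at hy ⊢
      rw [hσ, hf, hy]
    simpa using (hπ (f i)).lt_iff_lt hmx hmy
  constructor
  · intro h i x hx y hy hxy
    exact (key i x hx y hy).mp (h i hx hy hxy)
  · intro h i x hx y hy hxy
    exact (key i x hx y hy).mpr (h i hx hy hxy)
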